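/- Let H be a complex Hilbert space and let T ∈ B(H) be hyponormal. Then ker(I − T) reduces T, and the power sequence {T^n} is weakly convergent if and only if ⟨T^n x, y⟩ → 0 as n → ∞ for every x ∈ ker(I − T)^⊥ and every y ∈ H; if this is the case, then the weak limit of {T^n} is the orthogonal projection of H onto ker(I − T) and ker(I − T) = ker(I − T*). -/

import Mathlib

open Filter Topology ContinuousLinearMap

section Helpers

set_option linter.unusedSectionVars false

variable {H : Type*} [NormedAddCommGroup H] [InnerProductSpace ℂ H] [CompleteSpace H]

local notation "⟪" x ", " y "⟫" => @inner ℂ _ _ x y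

lemma memM_iff (T : H →L[ℂ] H) (x : H) : x ∈ LinearMap.ker ((1 - T : H →L[ℂ] H) : H →ₗ[ℂ] H) ↔ T x = x := by
  rw [LinearMap.mem_ker]
  show (1 - T) x = 0 ↔ _
  rw [ContinuousLinearMap.sub_apply, ContinuousLinearMap.one_apply, sub_eq_zero, eq_comm]

lemma hypo_norm (T : H →L[ℂ] H)
    (hhypo : (adjoint T ∘L T - T ∘L adjoint T).IsPositive) (x : H) :
    ‖adjoint T x‖ ^ 2 ≤ ‖T x‖ ^ 2 := by
  have h := hhypo.inner_nonneg_left x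
  rw [ContinuousLinearMap.sub_apply, comp_apply, comp_apply,
    inner_sub_left, ← adjoint_inner_right T (adjoint T x) x, adjoint_inner_left,
    inner_self_eq_norm_sq_to_K, inner_self_eq_norm_sq_to_K] at h
  norm_cast at h
  have h' : (0 : ℝ) ≤ ‖T x‖ ^ 2 - ‖adjoint T x‖ ^ 2 := RCLike.ofReal_nonneg.mp h
  linarith

lemma adj_fix (T : H →L[ℂ] H)
    (hhypo : (adjoint T ∘L T - T ∘L adjoint T).IsPositive) {x : H} (hx : T x = x) :
    adjoint T x = x := by
  have h1 : ‖adjoint T x‖ ^ 2 ≤ ‖x‖ ^ 2 := by simpa [hx] using hypo_norm T hhypo x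
  have e1 : ⟪adjoint T x, x⟫ = ⟪x, x⟫ := by rw [adjoint_inner_left, hx]
  have e2 : ⟪x, adjoint T x⟫ = ⟪x, x⟫ := by rw [adjoint_inner_right, hx]
  have h2 : RCLike.re ⟪adjoint T x - x, adjoint T x - x⟫ ≤ 0 := by
    rw [inner_sub_sub_self, e1, e2]
    have : ⟪adjoint T x, adjoint T x⟫ - ⟪x, x⟫ - ⟪x, x⟫ + ⟪x, x⟫
        = ⟪adjoint T x, adjoint T x⟫ - ⟪x, x⟫ := by ring
    rw [this, map_sub, inner_self_eq_norm_sq, inner_self_eq_norm_sq]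
    linarith
  have := re_inner_self_nonpos.mp h2
  rwa [sub_eq_zero] at this

lemma pow_fix (T : H →L[ℂ] H) {x : H} (hx : T x = x) (n : ℕ) : (T ^ n) x = x := by
  induction n with
  | zero => simp
  | succ n ih => rw [pow_succ, ContinuousLinearMap.mul_apply, hx, ih]

lemma inner_pow_adj (T : H →L[ℂ] H) (x z : H) (n : ℕ) :
    ⟪(T ^ n) x, z⟫ = ⟪x, ((adjoint T) ^ n) z⟫ := by
  have h : adjoint (T ^ n) = (adjoint T) ^ n := by
    rw [← star_eq_adjoint, ← star_eq_adjoint, star_pow]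
  rw [← h, adjoint_inner_right]

lemma fix_of_weak (T A : H →L[ℂ] H)
    (hA : ∀ x y : H, Tendsto (fun n : ℕ => ⟪(T ^ n) x, y⟫) atTop (𝓝 ⟪A x, y⟫)) (z : H) :
    T (A z) = A z := by
  apply ext_inner_right ℂ
  intro v
  have h1 : Tendsto (fun n : ℕ => ⟪(T ^ (n + 1)) z, v⟫) atTop (𝓝 ⟪A z, v⟫) :=
    (hA z v).comp (tendsto_add_atTop_nat 1)
  have h2 : Tendsto (fun n : ℕ => ⟪(T ^ (n + 1)) z, v⟫) atTop (𝓝 ⟪A z, adjoint T v⟫) := by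
    have : (fun n : ℕ => ⟪(T ^ (n + 1)) z, v⟫)
        = fun n : ℕ => ⟪(T ^ n) z, adjoint T v⟫ := by
      funext n
      rw [pow_succ', ContinuousLinearMap.mul_apply, ← adjoint_inner_right T ((T ^ n) z) v]
    rw [this]
    exact hA z (adjoint T v)
  rw [← adjoint_inner_right]
  exact tendsto_nhds_unique h2 h1

lemma weak_fix (T A : H →L[ℂ] H)
    (hA : ∀ x y : H, Tendsto (fun n : ℕ => ⟪(T ^ n) x, y⟫) atTop (𝓝 ⟪A x, y⟫))
    {x : H} (hx : T x = x) : A x = x := by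
  apply ext_inner_right ℂ
  intro v
  have h1 : Tendsto (fun n : ℕ => ⟪(T ^ n) x, v⟫) atTop (𝓝 ⟪x, v⟫) := by
    have : (fun n : ℕ => ⟪(T ^ n) x, v⟫) = fun _ : ℕ => ⟪x, v⟫ := by
      funext n; rw [pow_fix T hx]
    rw [this]; exact tendsto_const_nhds
  exact tendsto_nhds_unique (hA x v) h1

lemma weak_perp (T : H →L[ℂ] H)
    (hhypo : (adjoint T ∘L T - T ∘L adjoint T).IsPositive) (A : H →L[ℂ] H)
    (hA : ∀ x y : H, Tendsto (fun n : ℕ => ⟪(T ^ n) x, y⟫) atTop (𝓝 ⟪A x, y⟫))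
    {x : H} (hx : x ∈ (LinearMap.ker ((1 - T : H →L[ℂ] H) : H →ₗ[ℂ] H))ᗮ) : A x = 0 := by
  have hTA : T (A x) = A x := fix_of_weak T A hA x
  have hadj : adjoint T (A x) = A x := adj_fix T hhypo hTA
  have hmem : A x ∈ LinearMap.ker ((1 - T : H →L[ℂ] H) : H →ₗ[ℂ] H) := (memM_iff T _).mpr hTA
  have h0 : (fun n : ℕ => ⟪(T ^ n) x, A x⟫) = fun _ : ℕ => (0 : ℂ) := by
    funext n
    rw [inner_pow_adj, pow_fix (adjoint T) hadj]
    exact (Submodule.mem_orthogonal' _ _).mp hx _ hmem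
  have h1 : Tendsto (fun n : ℕ => ⟪(T ^ n) x, A x⟫) atTop (𝓝 (0 : ℂ)) := by
    rw [h0]; exact tendsto_const_nhds
  have h2 := tendsto_nhds_unique (hA x (A x)) h1
  exact inner_self_eq_zero.mp h2

end Helpers

/-- Let `T` be hyponormal (i.e. `T*T - TT*` is positive). Then `ker (I - T)` reduces
`T`, and `{T^n}` is weakly convergent iff `⟨T^n x, y⟩ → 0` for all `x ∈ ker (I - T)ᗮ`
and `y ∈ H`; in that case the weak limit is the orthogonal projection of `H` onto
`ker (I - T)` and `ker (I - T) = ker (I - T*)`. -/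
theorem stmt11 {H : Type*} [NormedAddCommGroup H] [InnerProductSpace ℂ H] [CompleteSpace H]
    (T : H →L[ℂ] H)
    (hhypo : (ContinuousLinearMap.adjoint T ∘L T - T ∘L ContinuousLinearMap.adjoint T).IsPositive) :
    ((∀ x ∈ LinearMap.ker ((1 - T : H →L[ℂ] H) : H →ₗ[ℂ] H), T x ∈ LinearMap.ker ((1 - T : H →L[ℂ] H) : H →ₗ[ℂ] H)) ∧
      (∀ x ∈ LinearMap.ker ((1 - T : H →L[ℂ] H) : H →ₗ[ℂ] H),
        ContinuousLinearMap.adjoint T x ∈ LinearMap.ker ((1 - T : H →L[ℂ] H) : H →ₗ[ℂ] H))) ∧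
    ((∃ A : H →L[ℂ] H, ∀ x y : H,
        Tendsto (fun n : ℕ => (inner ℂ ((T ^ n) x) y : ℂ)) atTop (𝓝 (inner ℂ (A x) y)))
      ↔ (∀ x ∈ (LinearMap.ker ((1 - T : H →L[ℂ] H) : H →ₗ[ℂ] H))ᗮ, ∀ y : H,
          Tendsto (fun n : ℕ => (inner ℂ ((T ^ n) x) y : ℂ)) atTop (𝓝 (0 : ℂ)))) ∧
    (∀ P : H →L[ℂ] H,
      (∀ x y : H,
        Tendsto (fun n : ℕ => (inner ℂ ((T ^ n) x) y : ℂ)) atTop (𝓝 (inner ℂ (P x) y))) →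
      (P ∘L P = P ∧ ContinuousLinearMap.adjoint P = P ∧
        LinearMap.range (P : H →ₗ[ℂ] H) = LinearMap.ker ((1 - T : H →L[ℂ] H) : H →ₗ[ℂ] H) ∧
        LinearMap.ker ((1 - T : H →L[ℂ] H) : H →ₗ[ℂ] H) = LinearMap.ker ((1 - ContinuousLinearMap.adjoint T : H →L[ℂ] H) : H →ₗ[ℂ] H))) := by
  haveI : CompleteSpace (LinearMap.ker ((1 - T : H →L[ℂ] H) : H →ₗ[ℂ] H)) :=
    (ContinuousLinearMap.isClosed_ker (1 - T)).completeSpace_coe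
  refine ⟨⟨?_, ?_⟩, ⟨?_, ?_⟩, ?_⟩
  · intro x hx
    rw [memM_iff] at hx ⊢
    simp [hx]
  · intro x hx
    rw [memM_iff] at hx ⊢
    rw [adj_fix T hhypo hx, hx]
  · rintro ⟨A, hA⟩ x hx y
    have h0 : A x = 0 := weak_perp T hhypo A hA hx
    simpa [h0] using hA x y
  · intro h
    refine ⟨(LinearMap.ker ((1 - T : H →L[ℂ] H) : H →ₗ[ℂ] H)).subtypeL ∘L Submodule.orthogonalProjectionOnto (LinearMap.ker ((1 - T : H →L[ℂ] H) : H →ₗ[ℂ] H)), ?_⟩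
    intro x y
    obtain ⟨m, hm, u, hu, hx⟩ := (LinearMap.ker ((1 - T : H →L[ℂ] H) : H →ₗ[ℂ] H)).exists_add_mem_mem_orthogonal x
    have hAx : ((LinearMap.ker ((1 - T : H →L[ℂ] H) : H →ₗ[ℂ] H)).subtypeL ∘L
        Submodule.orthogonalProjectionOnto (LinearMap.ker ((1 - T : H →L[ℂ] H) : H →ₗ[ℂ] H))) x = m := by
      rw [hx]
      simp only [comp_apply, map_add, Submodule.subtypeL_apply, Submodule.coe_add]
      rw [← Submodule.starProjection_apply, Submodule.starProjection_eq_self_iff.mpr hm,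
        Submodule.orthogonalProjectionOnto_apply_of_mem_orthogonal hu]
      simp
    have hTm : T m = m := (memM_iff T m).mp hm
    have hseq : (fun n : ℕ => (inner ℂ ((T ^ n) x) y : ℂ))
        = fun n : ℕ => (inner ℂ m y : ℂ) + inner ℂ ((T ^ n) u) y := by
      funext n
      rw [hx, map_add, pow_fix T hTm, inner_add_left]
    rw [hAx, hseq]
    simpa using tendsto_const_nhds.add (h u hu y)
  · intro P hP
    have hfix : ∀ z, T (P z) = P z := fix_of_weak T P hP
    have hPP : P ∘L P = P := by
      ext z
      exact weak_fix T P hP (hfix z)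
    have hrange : LinearMap.range (P : H →ₗ[ℂ] H) = LinearMap.ker ((1 - T : H →L[ℂ] H) : H →ₗ[ℂ] H) := by
      ext z
      constructor
      · rintro ⟨w, rfl⟩
        exact (memM_iff T _).mpr (hfix w)
      · intro hz
        exact ⟨z, weak_fix T P hP ((memM_iff T z).mp hz)⟩
    have hPadj : ContinuousLinearMap.adjoint P = P := by
      refine ((ContinuousLinearMap.eq_adjoint_iff P P).mpr ?_).symm
      intro x y
      obtain ⟨m, hm, u, hu, hx⟩ := (LinearMap.ker ((1 - T : H →L[ℂ] H) : H →ₗ[ℂ] H)).exists_add_mem_mem_orthogonal x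
      obtain ⟨m', hm', u', hu', hy⟩ := (LinearMap.ker ((1 - T : H →L[ℂ] H) : H →ₗ[ℂ] H)).exists_add_mem_mem_orthogonal y
      have hPx : P x = m := by
        rw [hx, map_add, weak_fix T P hP ((memM_iff T m).mp hm), weak_perp T hhypo P hP hu,
          add_zero]
      have hPy : P y = m' := by
        rw [hy, map_add, weak_fix T P hP ((memM_iff T m').mp hm'), weak_perp T hhypo P hP hu',
          add_zero]
      rw [hPx, hPy, hx, hy, inner_add_right, inner_add_left]
      rw [(Submodule.mem_orthogonal _ _).mp hu' m hm, (Submodule.mem_orthogonal' _ _).mp hu m' hm']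
    refine ⟨hPP, hPadj, hrange, ?_⟩
    ext z
    rw [memM_iff, memM_iff]
    constructor
    · intro hz
      exact adj_fix T hhypo hz
    · intro hz
      obtain ⟨m, hm, u, hu, hzd⟩ := (LinearMap.ker ((1 - T : H →L[ℂ] H) : H →ₗ[ℂ] H)).exists_add_mem_mem_orthogonal z
      have hTm : T m = m := (memM_iff T m).mp hm
      have hadjm : ContinuousLinearMap.adjoint T m = m := adj_fix T hhypo hTm
      have hadju : ContinuousLinearMap.adjoint T u = u := by
        have := hz
        rw [hzd, map_add, hadjm] at this
        exact add_left_cancel this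
      have h1 : (fun n : ℕ => (inner ℂ ((T ^ n) u) u : ℂ)) = fun _ : ℕ => (inner ℂ u u : ℂ) := by
        funext n
        rw [inner_pow_adj, pow_fix _ hadju]
      have h2 : Tendsto (fun n : ℕ => (inner ℂ ((T ^ n) u) u : ℂ)) atTop (𝓝 (inner ℂ u u : ℂ)) := by
        rw [h1]; exact tendsto_const_nhds
      have h3 := tendsto_nhds_unique (hP u u) h2
      rw [weak_perp T hhypo P hP hu] at h3
      simp only [inner_zero_left] at h3
      have hu0 : u = 0 := inner_self_eq_zero.mp h3.symm
      rw [hzd, hu0, add_zero, hTm]
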